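/- A consistent sample set has a realizing DBMM, namely the PTT: if S is a sample set such that whenever two samples share the same beta-input prefix w and alpha input j, their recorded outputs agree, then there exists a DBMM M such that for every (x,y) ∈ S and every alpha-input position i, M's output after processing the beta inputs of x[1..i-1] on input x_i equals y_i. -/
import Mathlib


/-- The subsequence of beta inputs of a mixed input word over `Iα ⊕ Iβ`. -/
def betaPart {Iα Iβ : Type*} : List (Iα ⊕ Iβ) → List Iβ
  | [] => []
  | Sum.inl _ :: xs => betaPart xs
  | Sum.inr b :: xs => b :: betaPart xs

universe u v w

/-- A consistent sample set has a realizing DBMM (namely the PTT):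
if whenever two samples share the same beta-input prefix and alpha input their
recorded outputs agree, then there exists a DBMM `(V, v0, T, G)` such that for
every sample `(x, y) ∈ S` and every alpha-input position `i`, the output of the
machine after processing the beta inputs of `x[1..i-1]` on input `x_i` equals
`y_i`. -/
theorem consistent_sample_set_realizable
    {Iα : Type u} {Iβ : Type v} {Out : Type w}
    (S : Set (List (Iα ⊕ Iβ) × List Out))
    (hcons : ∀ x y x' y', (x, y) ∈ S → (x', y') ∈ S →
      ∀ (i i' : ℕ) (j : Iα) (o o' : Out),
        x[i]? = some (Sum.inl j) → y[i]? = some o →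
        x'[i']? = some (Sum.inl j) → y'[i']? = some o' →
        betaPart (x.take i) = betaPart (x'.take i') → o = o') :
    ∃ (V : Type v) (v0 : V) (T : V → Iβ → V) (G : V → Iα → Option Out),
      ∀ x y, (x, y) ∈ S → ∀ (i : ℕ) (j : Iα) (o : Out),
        x[i]? = some (Sum.inl j) → y[i]? = some o →
        G ((betaPart (x.take i)).foldl T v0) j = some o := by
  classical
  refine ⟨List Iβ, [], fun v b => v ++ [b], fun w j =>
    if h : ∃ x y i o, (x, y) ∈ S ∧ x[i]? = some (Sum.inl j) ∧ y[i]? = some o ∧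
        betaPart (x.take i) = w then some h.choose_spec.choose_spec.choose_spec.choose
    else none, ?_⟩
  intro x y hxy i j o hx hy
  have hfold : ∀ (l : List Iβ) (v : List Iβ),
      l.foldl (fun v b => v ++ [b]) v = v ++ l := by
    intro l
    induction l with
    | nil => simp
    | cons b l ih => intro v; simp [List.foldl, ih]
  rw [hfold]
  have hex : ∃ (x' : List (Iα ⊕ Iβ)) (y' : List Out) (i' : ℕ) (o' : Out), (x', y') ∈ S ∧ x'[i']? = some (Sum.inl j) ∧
      y'[i']? = some o' ∧ betaPart (x'.take i') = [] ++ betaPart (x.take i) := by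
    exact ⟨x, y, i, o, hxy, hx, hy, by simp⟩
  simp only [List.nil_append] at hex ⊢
  rw [dif_pos hex]
  obtain ⟨h1, h2, h3, h4⟩ := hex.choose_spec.choose_spec.choose_spec.choose_spec
  exact congrArg some (hcons _ _ _ _ h1 hxy _ _ _ _ _ h2 h3 hx hy h4)
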